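/- arXiv:1904.05566 — 8 statements merged into one kernel-verified Lean document; each statement's English description precedes it below -/
import Mathlib

section
/- Let a be a real number and A := -((1/2 + i a)/(1/2 - i a)). Then the sum ∑_{ℓ=0}^{2n} A^ℓ equals zero if and only if Re((1/2 + i a)^{2n+1}) = 0. -/
theorem geom_sum_zero_iff_re_pow_zero (n : ℕ) (hn : 1 ≤ n) (a : ℝ)
    (A : ℂ) (hA : A = -((1/2 + Complex.I * a) / (1/2 - Complex.I * a))) :
    (∑ ℓ ∈ Finset.range (2 * n + 1), A ^ ℓ = 0) ↔
      ((1/2 + Complex.I * a) ^ (2 * n + 1)).re = 0 := by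
  set z : ℂ := 1/2 + Complex.I * a with hz
  have hconj : (starRingEnd ℂ) z = 1/2 - Complex.I * a := by
    simp [hz, Complex.ext_iff]
  have hzre : z.re = 1/2 := by simp [hz]
  have hz0 : z ≠ 0 := by
    intro h; rw [h] at hzre; simp at hzre
  have hcz0 : (starRingEnd ℂ) z ≠ 0 := by
    simpa using hz0
  have hA' : A = -(z / (starRingEnd ℂ) z) := by rw [hA, hconj]
  have hAne : A ≠ 1 := by
    intro h
    rw [h] at hA'
    have : -z = (starRingEnd ℂ) z := by
      field_simp at hA'
      linear_combination -hA'
    have := congrArg Complex.re this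
    simp [hzre] at this
    norm_num at this
  have hodd : Odd (2 * n + 1) := ⟨n, by ring⟩
  have hsum : (∑ ℓ ∈ Finset.range (2 * n + 1), A ^ ℓ)
      = (A ^ (2 * n + 1) - 1) / (A - 1) := geom_sum_eq hAne _
  rw [hsum, div_eq_zero_iff]
  have hAs : A - 1 ≠ 0 := sub_ne_zero.mpr hAne
  have hApow : A ^ (2 * n + 1) = -(z ^ (2 * n + 1) / ((starRingEnd ℂ) z) ^ (2 * n + 1)) := by
    rw [hA', hodd.neg_pow, div_pow]
  constructor
  · rintro (h | h)
    · rw [sub_eq_zero, hApow] at h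
      have hzp : z ^ (2 * n + 1) = -((starRingEnd ℂ) z) ^ (2 * n + 1) := by
        field_simp at h
        linear_combination -h
      have key : z ^ (2 * n + 1) + (starRingEnd ℂ) (z ^ (2 * n + 1)) = 0 := by
        rw [map_pow, hzp]; ring
      rw [Complex.add_conj] at key
      have := congrArg Complex.re key
      simpa using this
    · exact absurd h hAs
  · intro h
    left
    rw [sub_eq_zero, hApow]
    have key : z ^ (2 * n + 1) + (starRingEnd ℂ) (z ^ (2 * n + 1)) = 0 := by
      rw [Complex.add_conj, h]; simp
    rw [map_pow] at key
    rw [← neg_div, div_eq_one_iff_eq (pow_ne_zero _ hcz0)]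
    linear_combination -key
end

section
/- Let a > 0, t_a := 2√(1/4 + a²), and suppose w ∈ ℂ⁴ satisfies w₁w₂ + w₃w₄ = 1, |w₁|² + |w₂|² + |w₃|² + |w₄|² = 2t for some t with 1 < t < t_a. Then w₃w₄ ≠ 1/2 + ia. (Consequently the polynomial R_n does not vanish on M_t³ for t < t_n.) -/
theorem R_nonvanishing_on_Mt (a t : ℝ) (ha : 0 < a) (ht1 : 1 < t)
    (ht2 : t < 2 * Real.sqrt (1/4 + a ^ 2))
    (w1 w2 w3 w4 : ℂ) (hq : w1 * w2 + w3 * w4 = 1)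
    (hm : ‖w1‖ ^ 2 + ‖w2‖ ^ 2 + ‖w3‖ ^ 2 + ‖w4‖ ^ 2
      = 2 * t) :
    w3 * w4 ≠ 1/2 + Complex.I * a := by
  intro h34
  have h12 : w1 * w2 = 1/2 - Complex.I * a := by
    have := hq
    rw [h34] at this
    linear_combination this
  have habs : ‖(1/2 - Complex.I * (a:ℂ))‖ = Real.sqrt (1/4 + a ^ 2) := by
    rw [Complex.norm_def]
    congr 1
    simp [Complex.normSq_apply, Complex.sub_re, Complex.sub_im]
    ring
  have habs' : ‖(1/2 + Complex.I * (a:ℂ))‖ = Real.sqrt (1/4 + a ^ 2) := by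
    rw [Complex.norm_def]
    congr 1
    simp [Complex.normSq_apply]
    ring
  have h1 : 2 * ‖(w1 * w2)‖ ≤ ‖w1‖ ^ 2 + ‖w2‖ ^ 2 := by
    rw [norm_mul]
    nlinarith [sq_nonneg (‖w1‖ - ‖w2‖)]
  have h2 : 2 * ‖(w3 * w4)‖ ≤ ‖w3‖ ^ 2 + ‖w4‖ ^ 2 := by
    rw [norm_mul]
    nlinarith [sq_nonneg (‖w3‖ - ‖w4‖)]
  rw [h12, habs] at h1
  rw [h34, habs'] at h2
  nlinarith
end

section
/- Let a > 0 and t ≥ 2√(1/4 + a²). Then there exists x₀ > 0 with x₀ + (1/4 + a²)/x₀ = t, and the point w = (√x₀, (1/2 - ia)/√x₀, √x₀, (1/2 + ia)/√x₀) satisfies w₁w₂ + w₃w₄ = 1 and |w₁|² + |w₂|² + |w₃|² + |w₄|² = 2t, and w₃w₄ = 1/2 + ia. -/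
theorem degeneration_point_exists (a t : ℝ) (ha : 0 < a)
    (ht : t ≥ 2 * Real.sqrt (1/4 + a ^ 2)) :
    ∃ x0 : ℝ, 0 < x0 ∧ x0 + (1/4 + a ^ 2) / x0 = t ∧
      ((Real.sqrt x0 : ℂ) * ((1/2 - Complex.I * a) / Real.sqrt x0)
        + (Real.sqrt x0 : ℂ) * ((1/2 + Complex.I * a) / Real.sqrt x0) = 1) ∧
      (‖(Real.sqrt x0 : ℂ)‖ ^ 2
        + ‖(1/2 - Complex.I * a) / (Real.sqrt x0 : ℂ)‖ ^ 2
        + ‖(Real.sqrt x0 : ℂ)‖ ^ 2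
        + ‖(1/2 + Complex.I * a) / (Real.sqrt x0 : ℂ)‖ ^ 2 = 2 * t) ∧
      ((Real.sqrt x0 : ℂ) * ((1/2 + Complex.I * a) / Real.sqrt x0) = 1/2 + Complex.I * a) := by
  have hcpos : (0:ℝ) < 1/4 + a ^ 2 := by positivity
  have htpos : 0 < t := lt_of_lt_of_le (by positivity) ht
  have hcs : Real.sqrt (1/4 + a ^ 2) ^ 2 = 1/4 + a ^ 2 := Real.sq_sqrt hcpos.le
  have hdisc : 0 ≤ t ^ 2 - 4 * (1/4 + a ^ 2) := by
    nlinarith [Real.sqrt_nonneg (1/4 + a ^ 2)]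
  set x0 := (t + Real.sqrt (t ^ 2 - 4 * (1/4 + a ^ 2))) / 2 with hx0
  have hxpos : 0 < x0 := by
    have := Real.sqrt_nonneg (t ^ 2 - 4 * (1/4 + a ^ 2))
    rw [hx0]; linarith
  have hsq : Real.sqrt (t ^ 2 - 4 * (1/4 + a ^ 2)) ^ 2 = t ^ 2 - 4 * (1/4 + a ^ 2) :=
    Real.sq_sqrt hdisc
  have heq : x0 + (1/4 + a ^ 2) / x0 = t := by
    field_simp
    nlinarith [hsq]
  have hs : (0:ℝ) < Real.sqrt x0 := Real.sqrt_pos.2 hxpos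
  have hsne : ((Real.sqrt x0 : ℝ) : ℂ) ≠ 0 := by exact_mod_cast hs.ne'
  have h1 : ‖((Real.sqrt x0 : ℝ) : ℂ)‖ ^ 2 = x0 := by
    rw [Complex.norm_of_nonneg hs.le, Real.sq_sqrt hxpos.le]
  have h2 : ‖(1/2 - Complex.I * a) / ((Real.sqrt x0 : ℝ) : ℂ)‖ ^ 2
      = (1/4 + a ^ 2) / x0 := by
    rw [norm_div, div_pow, h1, Complex.sq_norm]
    congr 1
    simp [Complex.normSq_apply]
    ring
  have h3 : ‖(1/2 + Complex.I * a) / ((Real.sqrt x0 : ℝ) : ℂ)‖ ^ 2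
      = (1/4 + a ^ 2) / x0 := by
    rw [norm_div, div_pow, h1, Complex.sq_norm]
    congr 1
    simp [Complex.normSq_apply]
    ring
  refine ⟨x0, hxpos, heq, ?_, ?_, ?_⟩
  · field_simp
    ring
  · rw [h1, h2, h3]
    linarith
  · field_simp
end

section
/- For every real t ≥ √2, there exists u ≠ 0 real with 2u² + 1/u² = 2t, and the two distinct points w = (u, 1/u, u, 0) and w' = (u, 0, u, 1/u) both lie on M_t³ (i.e., satisfy w₁w₂ + w₃w₄ = 1 and |w₁|²+|w₂|²+|w₃|²+|w₄|² = 2t) and satisfy P_n(w) = P_n(w') = 0 for every n, where P_n(w) = ∑_{k=1}^{2n} α_k w₁^{2n-k} w₂^{2n-k+1} w₃^{k-1} w₄^{k} for any coefficients α_k ∈ ℂ. -/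
theorem noninjectivity_points (t : ℝ) (ht : t ≥ Real.sqrt 2) :
    ∃ u : ℝ, u ≠ 0 ∧ 2 * u ^ 2 + 1 / u ^ 2 = 2 * t ∧
      (((u : ℂ), (1/u : ℂ), (u : ℂ), (0 : ℂ)) ≠ ((u : ℂ), (0 : ℂ), (u : ℂ), (1/u : ℂ))) ∧
      ((u : ℂ) * (1/u : ℂ) + (u : ℂ) * 0 = 1) ∧
      (‖(u : ℂ)‖ ^ 2 + ‖(1/u : ℂ)‖ ^ 2 + ‖(u : ℂ)‖ ^ 2
        + ‖(0 : ℂ)‖ ^ 2 = 2 * t) ∧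
      ((u : ℂ) * (0 : ℂ) + (u : ℂ) * (1/u : ℂ) = 1) ∧
      (‖(u : ℂ)‖ ^ 2 + ‖(0 : ℂ)‖ ^ 2 + ‖(u : ℂ)‖ ^ 2
        + ‖(1/u : ℂ)‖ ^ 2 = 2 * t) ∧
      (∀ n : ℕ, 1 ≤ n → ∀ α : ℕ → ℂ,
        (∑ k ∈ Finset.Icc 1 (2 * n),
          α k * (u : ℂ) ^ (2 * n - k) * (1/u : ℂ) ^ (2 * n - k + 1)
            * (u : ℂ) ^ (k - 1) * (0 : ℂ) ^ k) = 0 ∧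
        (∑ k ∈ Finset.Icc 1 (2 * n),
          α k * (u : ℂ) ^ (2 * n - k) * (0 : ℂ) ^ (2 * n - k + 1)
            * (u : ℂ) ^ (k - 1) * (1/u : ℂ) ^ k) = 0) := by
  have ht2 : (2 : ℝ) ≤ t ^ 2 := by
    have h0 : (0:ℝ) ≤ Real.sqrt 2 := Real.sqrt_nonneg 2
    nlinarith [Real.sq_sqrt (by norm_num : (0:ℝ) ≤ 2), pow_le_pow_left₀ h0 ht 2]
  have htpos : 0 < t := by
    have : (0:ℝ) < Real.sqrt 2 := Real.sqrt_pos.mpr (by norm_num)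
    linarith
  set s : ℝ := Real.sqrt (t ^ 2 - 2) with hs
  have hs2 : s ^ 2 = t ^ 2 - 2 := Real.sq_sqrt (by linarith)
  have hsnn : 0 ≤ s := Real.sqrt_nonneg _
  set x : ℝ := (t + s) / 2 with hx
  have hxpos : 0 < x := by positivity
  refine ⟨Real.sqrt x, ?_, ?_, ?_, ?_, ?_, ?_, ?_, ?_⟩
  · exact ne_of_gt (Real.sqrt_pos.mpr hxpos)
  · have hu2 : Real.sqrt x ^ 2 = x := Real.sq_sqrt hxpos.le
    rw [hu2]
    field_simp
    nlinarith [hs2]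
  · intro h
    have h2 := congrArg (fun p => p.2.1) h
    simp only at h2
    have : (Real.sqrt x : ℂ) ≠ 0 := by
      exact_mod_cast Complex.ofReal_ne_zero.mpr (ne_of_gt (Real.sqrt_pos.mpr hxpos))
    rw [one_div] at h2
    exact inv_ne_zero this h2
  · have : (Real.sqrt x : ℂ) ≠ 0 :=
      Complex.ofReal_ne_zero.mpr (ne_of_gt (Real.sqrt_pos.mpr hxpos))
    field_simp
    simp
  · have hu2 : Real.sqrt x ^ 2 = x := Real.sq_sqrt hxpos.le
    have hune : Real.sqrt x ≠ 0 := ne_of_gt (Real.sqrt_pos.mpr hxpos)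
    rw [← Complex.ofReal_one, ← Complex.ofReal_div]
    simp only [Complex.norm_real, Real.norm_eq_abs, norm_zero]
    rw [abs_of_nonneg (Real.sqrt_nonneg x), abs_of_nonneg (by positivity : (0:ℝ) ≤ 1 / Real.sqrt x)]
    rw [div_pow, one_pow, hu2]
    field_simp
    nlinarith [hs2]
  · have : (Real.sqrt x : ℂ) ≠ 0 :=
      Complex.ofReal_ne_zero.mpr (ne_of_gt (Real.sqrt_pos.mpr hxpos))
    field_simp
    simp
  · have hu2 : Real.sqrt x ^ 2 = x := Real.sq_sqrt hxpos.le
    rw [← Complex.ofReal_one, ← Complex.ofReal_div]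
    simp only [Complex.norm_real, Real.norm_eq_abs, norm_zero]
    rw [abs_of_nonneg (Real.sqrt_nonneg x), abs_of_nonneg (by positivity : (0:ℝ) ≤ 1 / Real.sqrt x)]
    rw [div_pow, one_pow, hu2]
    field_simp
    nlinarith [hs2]
  · intro n hn α
    constructor
    · apply Finset.sum_eq_zero
      intro k hk
      have hk1 : 1 ≤ k := (Finset.mem_Icc.mp hk).1
      rw [zero_pow (by omega), mul_zero]
    · apply Finset.sum_eq_zero
      intro k hk
      have hk2 : k ≤ 2 * n := (Finset.mem_Icc.mp hk).2
      rw [zero_pow (by omega), mul_zero, zero_mul, zero_mul]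
end

section
/- Let w, ŵ ∈ ℂ⁴ lie on the quadric w₁w₂ + w₃w₄ = 1, with w₁ = ŵ₁, w₃ = ŵ₃, and P₁(w) = P₁(ŵ), where P₁(w) = -(1/6 + i/(2√3)) w₁w₂²w₄ + (1/6 - i/(2√3)) w₂w₃w₄². If w₁ = 0 or w₃ = 0, then w = ŵ. -/
noncomputable def P1 (w1 w2 w3 w4 : ℂ) : ℂ :=
  -(1/6 + Complex.I / (2 * Real.sqrt 3)) * w1 * w2 ^ 2 * w4
    + (1/6 - Complex.I / (2 * Real.sqrt 3)) * w2 * w3 * w4 ^ 2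

lemma cplus_ne : (1/6 + Complex.I / (2 * Real.sqrt 3) : ℂ) ≠ 0 := by
  intro h
  have h3 : Real.sqrt 3 ≠ 0 := by positivity
  have := congrArg Complex.re h
  simp [Complex.div_re, Complex.add_re, Complex.ofReal_re, h3] at this

lemma cminus_ne : (1/6 - Complex.I / (2 * Real.sqrt 3) : ℂ) ≠ 0 := by
  intro h
  have h3 : Real.sqrt 3 ≠ 0 := by positivity
  have := congrArg Complex.re h
  simp [Complex.div_re, Complex.sub_re, Complex.ofReal_re, h3] at this

theorem fiber_trivial_on_axes (w1 w2 w3 w4 v2 v4 : ℂ)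
    (hq : w1 * w2 + w3 * w4 = 1) (hq' : w1 * v2 + w3 * v4 = 1)
    (hP : P1 w1 w2 w3 w4 = P1 w1 v2 w3 v4)
    (hzero : w1 = 0 ∨ w3 = 0) :
    v2 = w2 ∧ v4 = w4 := by
  unfold P1 at hP
  rcases hzero with h1 | h3
  · subst h1
    simp only [zero_mul, mul_zero, zero_add, mul_zero, mul_comm] at hq hq' hP
    -- hq : w3 * w4 = 1, hq' : w3 * v4 = 1
    have hw3 : w3 ≠ 0 := by intro h; rw [h] at hq; simp at hq
    have hv4 : v4 = w4 := by
      have : w3 * v4 = w3 * w4 := by rw [hq, hq']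
      exact mul_left_cancel₀ hw3 this
    rw [hv4] at hP
    have hw4 : w4 ≠ 0 := by intro h; rw [h] at hq; simp at hq
    refine ⟨?_, hv4⟩
    have key : ((1/6 - Complex.I / (2 * Real.sqrt 3)) * w3 * w4 ^ 2) * v2
           = ((1/6 - Complex.I / (2 * Real.sqrt 3)) * w3 * w4 ^ 2) * w2 := by
      linear_combination -hP
    exact mul_left_cancel₀ (by exact mul_ne_zero (mul_ne_zero cminus_ne hw3) (pow_ne_zero _ hw4)) key
  · subst h3
    simp only [zero_mul, mul_zero, add_zero, zero_add] at hq hq' hP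
    have hw1 : w1 ≠ 0 := by intro h; rw [h] at hq; simp at hq
    have hv2 : v2 = w2 := by
      have : w1 * v2 = w1 * w2 := by rw [hq, hq']
      exact mul_left_cancel₀ hw1 this
    rw [hv2] at hP
    have hw2 : w2 ≠ 0 := by intro h; rw [h] at hq; simp at hq
    refine ⟨hv2, ?_⟩
    have key : ((1/6 + Complex.I / (2 * Real.sqrt 3)) * w1 * w2 ^ 2) * v4
         = ((1/6 + Complex.I / (2 * Real.sqrt 3)) * w1 * w2 ^ 2) * w4 := by
      linear_combination hP
    exact mul_left_cancel₀ (mul_ne_zero (mul_ne_zero cplus_ne hw1) (pow_ne_zero _ hw2)) key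
end

section
/- Let w, ŵ ∈ ℂ⁴ lie on the quadric w₁w₂ + w₃w₄ = 1 with w₁ = ŵ₁ ≠ 0, w₃ = ŵ₃ ≠ 0, and P₁(w) = P₁(ŵ) for P₁ as above. Then either ŵ₄ = w₄ (hence ŵ = w), or ŵ₄ = -((1 + i√3)/(2w₃))(w₃w₄ - 1), or ŵ₄ = -((1 - i√3)/(2w₃))(w₃w₄ - (1 + i√3)/2). -/
theorem fiber_structure (w1 w2 w3 w4 v2 v4 : ℂ)
    (h1 : w1 ≠ 0) (h3 : w3 ≠ 0)
    (hq : w1 * w2 + w3 * w4 = 1) (hq' : w1 * v2 + w3 * v4 = 1)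
    (hP : P1 w1 w2 w3 w4 = P1 w1 v2 w3 v4) :
    (v4 = w4 ∧ v2 = w2) ∨
    v4 = -((1 + Complex.I * Real.sqrt 3) / (2 * w3)) * (w3 * w4 - 1) ∨
    v4 = -((1 - Complex.I * Real.sqrt 3) / (2 * w3))
      * (w3 * w4 - (1 + Complex.I * Real.sqrt 3) / 2) := by
  set s : ℂ := (Real.sqrt 3 : ℂ) with hs_def
  have hs : s ^ 2 = 3 := by
    rw [hs_def, ← Complex.ofReal_pow, Real.sq_sqrt (by norm_num : (3:ℝ) ≥ 0)]
    norm_num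
  have hsne : s ≠ 0 := by
    intro h
    rw [h] at hs
    norm_num at hs
  have hI : Complex.I ^ 2 = -1 := Complex.I_sq
  have hc : Complex.I / (2 * s) = Complex.I * s / 6 := by
    field_simp
    linear_combination -2 * hs
  have hu : w1 * w2 = 1 - w3 * w4 := eq_sub_of_add_eq hq
  have hv : w1 * v2 = 1 - w3 * v4 := eq_sub_of_add_eq hq'
  unfold P1 at hP
  rw [← hs_def, hc] at hP
  have hP2 : -(1 + Complex.I * s) * (w1 * w2) ^ 2 * (w3 * w4)
        + (1 - Complex.I * s) * (w1 * w2) * (w3 * w4) ^ 2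
      = -(1 + Complex.I * s) * (w1 * v2) ^ 2 * (w3 * v4)
        + (1 - Complex.I * s) * (w1 * v2) * (w3 * v4) ^ 2 := by
    linear_combination (6 * w1 * w3) * hP
  rw [hu, hv] at hP2
  have key : w3 * ((v4 - w4) * ((2 * w3 * v4 + (1 + Complex.I * s) * (w3 * w4 - 1))
      * (2 * w3 * v4 + (1 - Complex.I * s) * (w3 * w4 - (1 + Complex.I * s) / 2)))) = 0 := by
    linear_combination 2 * hP2
      + ((-1/2)*w3*v4*s^2 + (-1/2)*w3*v4*Complex.I*s^3 + (1/2)*w3*w4*s^2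
        + (1/2)*w3*w4*Complex.I*s^3 + w3^2*v4^2*s^2 + (1/2)*w3^2*w4*v4*s^2
        + (1/2)*w3^2*w4*v4*Complex.I*s^3 + (-3/2)*w3^2*w4^2*s^2
        + (-1/2)*w3^2*w4^2*Complex.I*s^3 + (-1)*w3^3*w4^2*v4*s^2 + w3^3*w4^3*s^2) * hI
      + ((1/2)*w3*v4 + (1/2)*w3*v4*Complex.I*s + (-1/2)*w3*w4 + (-1/2)*w3*w4*Complex.I*s
        + (-1)*w3^2*v4^2 + (-1/2)*w3^2*w4*v4 + (-1/2)*w3^2*w4*v4*Complex.I*s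
        + (3/2)*w3^2*w4^2 + (1/2)*w3^2*w4^2*Complex.I*s + w3^3*w4^2*v4 + (-1)*w3^3*w4^3) * hs
  have key2 := (mul_eq_zero.mp key).resolve_left h3
  rcases mul_eq_zero.mp key2 with h | h
  · left
    have h4 : v4 = w4 := sub_eq_zero.mp h
    refine ⟨h4, ?_⟩
    have : w1 * v2 = w1 * w2 := by
      rw [h4] at hq'
      linear_combination hq' - hq
    exact mul_left_cancel₀ h1 this
  · rcases mul_eq_zero.mp h with h | h
    · right; left
      field_simp
      linear_combination h
    · right; right
      field_simp
      linear_combination 2 * h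
end

section
/- Neither the line {b ∈ ℂ : 2 Re(b) - 1 = 0} nor the line {b ∈ ℂ : Re(b) - √3 Im(b) = 0} intersects the open set 𝒟 = ℰ₁ ∩ ℰ₂, where ℰ₁ = {z ∈ ℂ : |z - 1| + |z| < √5/2} and ℰ₂ = {z ∈ ℂ : |z - 1| + |z - (1 + i√3)/2| < √5/2}. -/
set_option maxHeartbeats 1000000 in
theorem lines_miss_D (b : ℂ)
    (h1 : ‖b - 1‖ + ‖b‖ < Real.sqrt 5 / 2)
    (h2 : ‖b - 1‖ + ‖b - (1 + Complex.I * Real.sqrt 3) / 2‖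
      < Real.sqrt 5 / 2) :
    2 * b.re - 1 ≠ 0 ∧ b.re - Real.sqrt 3 * b.im ≠ 0 := by
  have hs3 : Real.sqrt 3 ^ 2 = 3 := Real.sq_sqrt (by norm_num)
  have hs3p : 0 < Real.sqrt 3 := Real.sqrt_pos.mpr (by norm_num)
  have hs5 : Real.sqrt 5 ^ 2 = 5 := Real.sq_sqrt (by norm_num)
  have hs5p : 0 < Real.sqrt 5 := Real.sqrt_pos.mpr (by norm_num)
  have n0 : 0 ≤ ‖b‖ := norm_nonneg _
  have n1 : 0 ≤ ‖b - 1‖ := norm_nonneg _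
  have n2 : 0 ≤ ‖b - (1 + Complex.I * Real.sqrt 3) / 2‖ := norm_nonneg _
  have h33 : Real.sqrt 3 ^ 2 * b.im ^ 2 = 3 * b.im ^ 2 := by rw [hs3]
  have e0 : (‖b‖) ^ 2 = b.re ^ 2 + b.im ^ 2 := by
    rw [Complex.sq_norm, Complex.normSq_apply]; ring
  have e1 : (‖b - 1‖) ^ 2 = (b.re - 1) ^ 2 + b.im ^ 2 := by
    rw [Complex.sq_norm, Complex.normSq_apply]; simp; ring
  have e2 : (‖b - (1 + Complex.I * Real.sqrt 3) / 2‖) ^ 2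
      = (b.re - 1 / 2) ^ 2 + (b.im - Real.sqrt 3 / 2) ^ 2 := by
    rw [Complex.sq_norm, Complex.normSq_apply]
    simp [Complex.sub_re, Complex.sub_im, Complex.div_re, Complex.div_im,
      Complex.add_re, Complex.add_im, Complex.mul_re, Complex.mul_im,
      Complex.normSq_apply]
    ring
  constructor
  · intro heq
    have hre : b.re = 1 / 2 := by linarith
    have ha01 : ‖b‖ = ‖b - 1‖ := by
      have hsq : (‖b‖) ^ 2 = (‖b - 1‖) ^ 2 := by
        rw [e0, e1, hre]; ring
      calc ‖b‖ = Real.sqrt ((‖b‖) ^ 2) := (Real.sqrt_sq n0).symm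
        _ = Real.sqrt ((‖b - 1‖) ^ 2) := by rw [hsq]
        _ = ‖b - 1‖ := Real.sqrt_sq n1
    rw [hre] at e1 e2
    have ht2 : b.im ^ 2 < 1 / 16 := by
      have h1' : ‖b - 1‖ < Real.sqrt 5 / 4 := by rw [ha01] at h1; linarith
      have := pow_lt_pow_left₀ h1' n1 (two_ne_zero)
      nlinarith [this, e1, hs5]
    have htlt : b.im < 1 / 4 := by nlinarith [sq_nonneg (b.im - 1 / 4)]
    have hA : Real.sqrt 5 * ‖b - 1‖ < 3 / 4 + Real.sqrt 3 * b.im := by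
      have h2' : ‖b - (1 + Complex.I * Real.sqrt 3) / 2‖
          < Real.sqrt 5 / 2 - ‖b - 1‖ := by linarith
      have := pow_lt_pow_left₀ h2' n2 (two_ne_zero)
      rw [e2] at this
      nlinarith [this, e1, hs5, hs3]
    have hA2 : 5 * (‖b - 1‖) ^ 2 < (3 / 4 + Real.sqrt 3 * b.im) ^ 2 := by
      have hnn : 0 ≤ Real.sqrt 5 * ‖b - 1‖ := mul_nonneg hs5p.le n1
      have h := pow_lt_pow_left₀ hA hnn (two_ne_zero)
      rw [mul_pow, hs5] at h
      exact h
    rw [e1] at hA2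
    -- hA2 : 5*((1/2-1)^2 + t^2) < (3/4 + s3 t)^2, i.e. 2t² + 11/16 < 1.5 s3 t
    have hX : Real.sqrt 3 * b.im < Real.sqrt 3 / 4 := by
      linarith [mul_pos hs3p (show (0:ℝ) < 1 / 4 - b.im by linarith)]
    nlinarith [hA2, h33, hX, sq_nonneg (Real.sqrt 3 - 7 / 4), sq_nonneg b.im]
  · intro heq
    have hre : b.re = Real.sqrt 3 * b.im := by linarith
    rw [hre] at e0 e1 e2
    have ha12 : ‖b - (1 + Complex.I * Real.sqrt 3) / 2‖ = ‖b - 1‖ := by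
      have hsq : (‖b - (1 + Complex.I * Real.sqrt 3) / 2‖) ^ 2
          = (‖b - 1‖) ^ 2 := by rw [e2, e1]; linear_combination (1/4 : ℝ) * hs3
      calc ‖b - (1 + Complex.I * Real.sqrt 3) / 2‖
          = Real.sqrt ((‖b - (1 + Complex.I * Real.sqrt 3) / 2‖) ^ 2) :=
            (Real.sqrt_sq n2).symm
        _ = Real.sqrt ((‖b - 1‖) ^ 2) := by rw [hsq]
        _ = ‖b - 1‖ := Real.sqrt_sq n1
    have hQ2 : 4 * b.im ^ 2 - 2 * (Real.sqrt 3 * b.im) + 11 / 16 < 0 := by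
      have h2' : ‖b - 1‖ < Real.sqrt 5 / 4 := by rw [ha12] at h2; linarith
      have := pow_lt_pow_left₀ h2' n1 (two_ne_zero)
      nlinarith [this, e1, hs5, h33]
    have hA : Real.sqrt 5 * ‖b - 1‖ < 9 / 4 - 2 * (Real.sqrt 3 * b.im) := by
      have h1' : ‖b‖ < Real.sqrt 5 / 2 - ‖b - 1‖ := by linarith
      have := pow_lt_pow_left₀ h1' n0 (two_ne_zero)
      rw [e0] at this
      nlinarith [this, e1, hs5, h33]
    have hA2 : 5 * (‖b - 1‖) ^ 2 < (9 / 4 - 2 * (Real.sqrt 3 * b.im)) ^ 2 := by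
      have hnn : 0 ≤ Real.sqrt 5 * ‖b - 1‖ := mul_nonneg hs5p.le n1
      have h := pow_lt_pow_left₀ hA hnn (two_ne_zero)
      rw [mul_pow, hs5] at h
      exact h
    rw [e1] at hA2
    have hQ1 : 8 * b.im ^ 2 - Real.sqrt 3 * b.im - 1 / 16 < 0 := by
      nlinarith [hA2, h33]
    have hXX : (Real.sqrt 3 * b.im) ^ 2 = 3 * b.im ^ 2 := by rw [mul_pow, hs3]
    nlinarith [hQ1, hQ2, hXX, sq_nonneg (Real.sqrt 3 * b.im - 23 / 48)]
end

section
/- Define φ(b) = ((b₁ - √3 b₂)/(2b₁ - 1) + 1) · (|b - 1|²(2b₁ - 1)/(b₁ - √3 b₂) + |b|²) for b ∈ ℂ with b₁ = Re(b), b₂ = Im(b). Then φ(b) ≥ 5/4 for all b in 𝒟 = ℰ₁ ∩ ℰ₂, where ℰ₁ = {z : |z-1| + |z| < √5/2} and ℰ₂ = {z : |z-1| + |z - (1+i√3)/2| < √5/2}. -/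
set_option maxHeartbeats 1000000

lemma lin_bound (X Y c1 c2 r : ℝ) (hr : 0 ≤ r) (h : r ^ 2 = X ^ 2 + Y ^ 2)
    (hc : c1 ^ 2 + c2 ^ 2 ≤ 1) : c1 * X + c2 * Y ≤ r := by
  nlinarith [sq_nonneg (c1 * Y - c2 * X), sq_nonneg (c1 * X + c2 * Y - r),
    sq_nonneg (c1 * X + c2 * Y + r), sq_nonneg r, sq_nonneg X, sq_nonneg Y]

lemma s_lb (s : ℝ) (h0 : 0 ≤ s) (h2 : s ^ 2 = 3) : (433:ℝ)/250 ≤ s := by nlinarith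

lemma t_ub (t : ℝ) (h0 : 0 ≤ t) (h2 : t ^ 2 = 5) : t ≤ (2237:ℝ)/1000 := by nlinarith

lemma half_plane (x y a u v s t : ℝ) (hs : 0 ≤ s) (hs2 : s ^ 2 = 3)
    (ht : 0 ≤ t) (ht2 : t ^ 2 = 5)
    (ha : 0 ≤ a) (hu : 0 ≤ u) (hv : 0 ≤ v)
    (ea : a ^ 2 = (x - 1) ^ 2 + y ^ 2) (eu : u ^ 2 = x ^ 2 + y ^ 2)
    (ev : v ^ 2 = (x - 1 / 2) ^ 2 + (y - s / 2) ^ 2)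
    (H1 : a + u < t / 2) (H2 : a + v < t / 2) : 2 * x - 1 > 0 := by
  by_contra hx
  push_neg at hx
  have ba : (-(16/17)) * (x - 1) + (1/3) * y ≤ a := by
    apply lin_bound _ _ _ _ _ ha ea; norm_num
  have bu : (16/17) * x + (1/3) * y ≤ u := by
    apply lin_bound _ _ _ _ _ hu eu; norm_num
  have bv : (0:ℝ) * (x - 1/2) + (-1) * (y - s/2) ≤ v := by
    apply lin_bound _ _ _ _ _ hv ev; norm_num
  have hsum : 2 * a + u + v < t := by linarith
  have hslb : (433:ℝ)/250 ≤ s := s_lb s hs hs2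
  have htub : t ≤ (2237:ℝ)/1000 := t_ub t ht ht2
  linarith

theorem phi_ge_on_D (b : ℂ)
    (h1 : ‖b - 1‖ + ‖b‖ < Real.sqrt 5 / 2)
    (h2 : ‖b - 1‖ + ‖b - (1 + Complex.I * Real.sqrt 3) / 2‖
      < Real.sqrt 5 / 2) :
    ((b.re - Real.sqrt 3 * b.im) / (2 * b.re - 1) + 1) *
      (‖b - 1‖ ^ 2 * (2 * b.re - 1) / (b.re - Real.sqrt 3 * b.im)
        + ‖b‖ ^ 2) ≥ 5 / 4 := by
  set s := Real.sqrt 3 with hs_def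
  set t := Real.sqrt 5 with ht_def
  set x := b.re with hx_def
  set y := b.im with hy_def
  have hs : 0 ≤ s := Real.sqrt_nonneg 3
  have ht : 0 ≤ t := Real.sqrt_nonneg 5
  have hs2 : s ^ 2 = 3 := Real.sq_sqrt (by norm_num)
  have ht2 : t ^ 2 = 5 := Real.sq_sqrt (by norm_num)
  set a := ‖b - 1‖ with ha_def
  set u := ‖b‖ with hu_def
  set v := ‖b - (1 + Complex.I * s) / 2‖ with hv_def
  have ha : 0 ≤ a := norm_nonneg _
  have hu : 0 ≤ u := norm_nonneg _
  have hv : 0 ≤ v := norm_nonneg _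
  have ea : a ^ 2 = (x - 1) ^ 2 + y ^ 2 := by
    rw [ha_def, Complex.sq_norm, Complex.normSq_apply]
    simp [Complex.sub_re, Complex.sub_im]
    ring
  have eu : u ^ 2 = x ^ 2 + y ^ 2 := by
    rw [hu_def, Complex.sq_norm, Complex.normSq_apply]
    ring
  have ev : v ^ 2 = (x - 1 / 2) ^ 2 + (y - s / 2) ^ 2 := by
    rw [hv_def, Complex.sq_norm, Complex.normSq_apply]
    simp [Complex.sub_re, Complex.sub_im, Complex.div_re, Complex.div_im,
      Complex.add_re, Complex.add_im, Complex.mul_re, Complex.mul_im,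
      Complex.normSq_apply, Complex.one_re, Complex.one_im, Complex.I_re, Complex.I_im]
    ring
  have hp : 2 * x - 1 > 0 :=
    half_plane x y a u v s t hs hs2 ht ht2 ha hu hv ea eu ev h1 h2
  have hq : x - s * y > 0 := by
    have key : 2 * ((x - s * y + 1) / 2) - 1 > 0 := by
      apply half_plane ((x - s * y + 1) / 2) ((s * (1 - x) - y) / 2) a v u s t hs hs2 ht ht2
        ha hv hu ?_ ?_ ?_ h2 h1
      · rw [ea]; linear_combination (-((x-1)^2 + y^2)/4) * hs2
      · rw [ev]; linear_combination ((2*x - x^2 - y^2)/4) * hs2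
      · rw [eu]; linear_combination (-(x^2 + y^2)/4) * hs2
    linarith
  have hp0 : (2 * x - 1) ≠ 0 := ne_of_gt hp
  have hq0 : (x - s * y) ≠ 0 := ne_of_gt hq
  have idk : 12 * (4 * (((x - s*y) + (2*x - 1)) * (a^2 * (2*x-1) + u^2 * (x - s*y)))
        - 5 * ((2*x-1) * (x - s*y)))
      = ((2*x-1) * (x - s*y)) * (4*(2*x-1) + 4*(x - s*y) - 2)^2
        + 16 * ((2*x-1) - (x - s*y))^2 * (((2*x-1) + (x - s*y) - 1/2)^2 + 3/4) := by
    rw [ea, eu]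
    linear_combination (-16*y^4*s^2 + 96*x*y^3*s - 32*y^3*s - 144*x^2*y^2 + 96*x*y^2 - 16*y^2) * hs2
  have n1 : 0 ≤ ((2*x-1) * (x - s*y)) * (4*(2*x-1) + 4*(x - s*y) - 2)^2 :=
    mul_nonneg (mul_nonneg hp.le hq.le) (sq_nonneg _)
  have n2 : 0 ≤ 16 * ((2*x-1) - (x - s*y))^2 * (((2*x-1) + (x - s*y) - 1/2)^2 + 3/4) := by
    positivity
  have key : 5 * ((2*x-1) * (x - s*y))
      ≤ 4 * (((x - s*y) + (2*x - 1)) * (a^2 * (2*x-1) + u^2 * (x - s*y))) := by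
    linarith
  have heq : ((x - s*y) / (2*x-1) + 1) * (a^2 * (2*x-1) / (x - s*y) + u^2)
      = 4 * (((x - s*y) + (2*x - 1)) * (a^2 * (2*x-1) + u^2 * (x - s*y)))
        / (4 * ((2*x-1) * (x - s*y))) := by
    rw [div_add_one hp0, div_add' _ _ _ hq0, div_mul_div_comm,
      div_eq_div_iff (mul_ne_zero hp0 hq0) (mul_ne_zero four_ne_zero (mul_ne_zero hp0 hq0))]
    ring
  rw [ge_iff_le, heq, le_div_iff₀ (by positivity)]
  linarith
end
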